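/- Let A, B be bounded linear operators on a complex Hilbert space H and r ≥ 1. Then ω^{2r}(B*A) ≤ (1/2)‖|A|^{4r} + |B|^{4r}‖, where ω is the numerical radius. -/

import Mathlib

set_option synthInstance.maxHeartbeats 1000000
set_option maxHeartbeats 1000000

open scoped InnerProductSpace

noncomputable def opAbs {H : Type*} [NormedAddCommGroup H] [InnerProductSpace ℂ H]
    [CompleteSpace H] (T : H →L[ℂ] H) : H →L[ℂ] H :=
  CFC.sqrt ((ContinuousLinearMap.adjoint T) * T)

noncomputable def numRadius {H : Type*} [NormedAddCommGroup H] [InnerProductSpace ℂ H]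
    (T : H →L[ℂ] H) : ℝ :=
  ⨆ x : {y : H // ‖y‖ = 1}, ‖⟪T (x : H), (x : H)⟫_ℂ‖

open scoped NNReal
open ContinuousLinearMap RCLike

section Aux

variable {H : Type*} [NormedAddCommGroup H] [InnerProductSpace ℂ H] [CompleteSpace H]

private lemma tangent_rpow {t s p : ℝ} (ht : 0 ≤ t) (hs : 0 ≤ s) (hp : 1 ≤ p) :
    p * s ^ (p - 1) * t - (p - 1) * s ^ p ≤ t ^ p := by
  rcases eq_or_lt_of_le hs with rfl | hs'
  · rcases eq_or_lt_of_le hp with rfl | hp'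
    · simp [Real.rpow_one]
    · rw [Real.zero_rpow (by linarith), Real.zero_rpow (by linarith)]
      simpa using Real.rpow_nonneg ht p
  · have hu : -1 ≤ t / s - 1 := by
      have : 0 ≤ t / s := div_nonneg ht hs'.le
      linarith
    have hb := one_add_mul_self_le_rpow_one_add hu hp
    have h1 : (1 : ℝ) + (t / s - 1) = t / s := by ring
    rw [h1] at hb
    have hb2 := mul_le_mul_of_nonneg_left hb (Real.rpow_nonneg hs'.le p)
    have hdiv : s ^ p * (t / s) ^ p = t ^ p := by
      rw [← Real.mul_rpow hs'.le (div_nonneg ht hs'.le)]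
      rw [mul_div_cancel₀ _ hs'.ne']
    rw [hdiv] at hb2
    have hsp1 : s ^ (p - 1) = s ^ p / s := by
      rw [Real.rpow_sub hs' p 1, Real.rpow_one]
    calc p * s ^ (p - 1) * t - (p - 1) * s ^ p
        = s ^ p * (1 + p * (t / s - 1)) := by
          rw [hsp1]; field_simp; ring
      _ ≤ t ^ p := hb2

private lemma rpow_eq_real_cfc (T : H →L[ℂ] H) (hT : 0 ≤ T) (p : ℝ) :
    CFC.rpow T p = cfc (fun t : ℝ => ((t.toNNReal ^ p : ℝ≥0) : ℝ)) T := by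
  rw [CFC.rpow, cfc_nnreal_eq_real _ _ hT]

private lemma inner_re_mono {S T : H →L[ℂ] H} (h : S ≤ T) (x : H) :
    re ⟪S x, x⟫_ℂ ≤ re ⟪T x, x⟫_ℂ := by
  have := (le_def S T).mp h |>.re_inner_nonneg_left x
  simp only [sub_apply, inner_sub_left, map_sub] at this
  linarith

private lemma affine_inner (T : H →L[ℂ] H) (c d : ℝ) (x : H) (hx : ‖x‖ = 1) :
    re ⟪(c • T - algebraMap ℝ (H →L[ℂ] H) d) x, x⟫_ℂ = c * re ⟪T x, x⟫_ℂ - d := by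
  rw [Algebra.algebraMap_eq_smul_one]
  have h1 : ⟪c • T x, x⟫_ℂ = (c : ℝ) • ⟪T x, x⟫_ℂ := by
    rw [← inner_smul_real_left]; norm_cast
  have h2 : ⟪d • x, x⟫_ℂ = (d : ℝ) • ⟪x, x⟫_ℂ := by
    rw [← inner_smul_real_left]; norm_cast
  simp only [sub_apply, smul_apply, ContinuousLinearMap.one_apply, inner_sub_left, map_sub, h1, h2,
    smul_re, inner_self_eq_norm_sq, hx]
  ring

/-- Hölder–McCarthy inequality. -/
private lemma mccarthy (T : H →L[ℂ] H) (hT : 0 ≤ T) {p : ℝ} (hp : 1 ≤ p) (x : H)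
    (hx : ‖x‖ = 1) :
    (re ⟪T x, x⟫_ℂ) ^ p ≤ re ⟪(CFC.rpow T p) x, x⟫_ℂ := by
  have hTpos : T.IsPositive := (nonneg_iff_isPositive T).mp hT
  have hsa : IsSelfAdjoint T := IsSelfAdjoint.of_nonneg hT
  set s : ℝ := re ⟪T x, x⟫_ℂ with hs_def
  have hs : 0 ≤ s := hTpos.re_inner_nonneg_left x
  have hp0 : p ≠ 0 := by positivity
  rcases eq_or_lt_of_le hs with hs0 | hs'
  · rw [← hs0, Real.zero_rpow hp0]
    exact ((nonneg_iff_isPositive _).mp CFC.rpow_nonneg).re_inner_nonneg_left x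
  · have hfc : ContinuousOn (fun t : ℝ => ((t.toNNReal ^ p : ℝ≥0) : ℝ)) (spectrum ℝ T) :=
      Continuous.continuousOn <|
        ((NNReal.continuous_rpow_const (le_trans zero_le_one hp)).comp
          continuous_real_toNNReal).subtype_val
    have hopineq : cfc (fun t : ℝ => p * s ^ (p-1) * t - (p-1) * s ^ p) T ≤ CFC.rpow T p := by
      rw [rpow_eq_real_cfc T hT p]
      refine cfc_mono (fun t ht => ?_) (by fun_prop) hfc
      have ht0 : 0 ≤ t := spectrum_nonneg_of_nonneg hT ht
      have : ((t.toNNReal ^ p : ℝ≥0) : ℝ) = t ^ p := by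
        rw [NNReal.coe_rpow, Real.coe_toNNReal t ht0]
      rw [this]
      exact tangent_rpow ht0 hs hp
    have h1 : cfc (fun t : ℝ => p * s ^ (p-1) * t - (p-1) * s ^ p) T
        = (p * s ^ (p-1)) • T - algebraMap ℝ (H →L[ℂ] H) ((p-1) * s ^ p) := by
      rw [cfc_sub _ _ T (by fun_prop) (by fun_prop), cfc_const_mul _ _ T (by fun_prop),
        cfc_id' ℝ T, cfc_const _ T]
    have h2 := inner_re_mono hopineq x
    rw [h1, affine_inner T _ _ x hx] at h2
    have h3 : p * s ^ (p - 1) * s - (p - 1) * s ^ p = s ^ p := by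
      have : s ^ (p - 1) * s = s ^ p := by
        nth_rewrite 2 [← Real.rpow_one s]
        rw [← Real.rpow_add hs', sub_add_cancel]
      nlinarith [this]
    linarith [h2, h3.symm.le]

private lemma rpow_opAbs (A : H →L[ℂ] H) (r : ℝ) (hr : 1 ≤ r) :
    CFC.rpow (opAbs A) (4 * r) = CFC.rpow ((ContinuousLinearMap.adjoint A) * A) (2 * r) := by
  have hpos : (0 : H →L[ℂ] H) ≤ (ContinuousLinearMap.adjoint A) * A := by
    rw [← star_eq_adjoint]; exact star_mul_self_nonneg A
  show (opAbs A) ^ (4 * r) = ((ContinuousLinearMap.adjoint A) * A) ^ (2 * r)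
  rw [opAbs, CFC.sqrt_eq_rpow,
    CFC.rpow_rpow_of_exponent_nonneg _ _ _ (by norm_num) (by linarith) hpos]
  congr 1; ring

private lemma inner_re_le_norm (S : H →L[ℂ] H) (x : H) (hx : ‖x‖ = 1) :
    re ⟪S x, x⟫_ℂ ≤ ‖S‖ := by
  calc re ⟪S x, x⟫_ℂ ≤ ‖⟪S x, x⟫_ℂ‖ := RCLike.re_le_norm _
    _ ≤ ‖S x‖ * ‖x‖ := norm_inner_le_norm _ _
    _ ≤ ‖S‖ * ‖x‖ * ‖x‖ := by
        have := S.le_opNorm x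
        nlinarith [norm_nonneg x, norm_nonneg (S x)]
    _ = ‖S‖ := by rw [hx]; ring

end Aux

theorem stmt_16 {H : Type*} [NormedAddCommGroup H] [InnerProductSpace ℂ H] [CompleteSpace H]
    (A B : H →L[ℂ] H) (r : ℝ) (hr : 1 ≤ r) :
    numRadius ((ContinuousLinearMap.adjoint B) * A) ^ (2 * r) ≤
      (1 / 2) * ‖CFC.rpow (opAbs A) (4 * r) + CFC.rpow (opAbs B) (4 * r)‖ := by
  have hApos : (0 : H →L[ℂ] H) ≤ (ContinuousLinearMap.adjoint A) * A := by
    rw [← star_eq_adjoint]; exact star_mul_self_nonneg A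
  have hBpos : (0 : H →L[ℂ] H) ≤ (ContinuousLinearMap.adjoint B) * B := by
    rw [← star_eq_adjoint]; exact star_mul_self_nonneg B
  have hp : (1 : ℝ) ≤ 2 * r := by linarith
  have h2r : (0 : ℝ) < 2 * r := by linarith
  rw [rpow_opAbs A r hr, rpow_opAbs B r hr]
  set P := CFC.rpow ((ContinuousLinearMap.adjoint A) * A) (2 * r) with hP
  set Q := CFC.rpow ((ContinuousLinearMap.adjoint B) * B) (2 * r) with hQ
  set M : ℝ := (1 / 2) * ‖P + Q‖ with hMdef
  have hM : 0 ≤ M := by positivity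
  have hsq : ∀ c : ℝ, 0 ≤ c → c ^ (2 * r) = (c ^ 2) ^ r := by
    intro c hc
    rw [show ((c : ℝ) ^ (2 : ℕ)) = c ^ ((2 : ℕ) : ℝ) from (Real.rpow_natCast c 2).symm,
      ← Real.rpow_mul hc]
    norm_num
  have hsq2 : ∀ c : ℝ, 0 ≤ c → c ^ (2 * r) = (c ^ r) ^ 2 := by
    intro c hc
    rw [show (2 : ℝ) * r = r * 2 by ring, Real.rpow_mul hc,
      show ((c ^ r : ℝ) ^ (2 : ℕ)) = (c ^ r) ^ ((2 : ℕ) : ℝ) from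
        (Real.rpow_natCast _ 2).symm]
    norm_num
  have key : ∀ x : {y : H // ‖y‖ = 1},
      ‖⟪((ContinuousLinearMap.adjoint B) * A) (x : H), (x : H)⟫_ℂ‖ ^ (2 * r) ≤ M := by
    rintro ⟨x, hx⟩
    dsimp only
    set a : ℝ := ‖A x‖ ^ 2 with ha_def
    set b : ℝ := ‖B x‖ ^ 2 with hb_def
    have ha0 : 0 ≤ a := sq_nonneg _
    have hb0 : 0 ≤ b := sq_nonneg _
    have hinner : ⟪((ContinuousLinearMap.adjoint B) * A) x, x⟫_ℂ = ⟪A x, B x⟫_ℂ := by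
      rw [ContinuousLinearMap.mul_apply, adjoint_inner_left]
    have step1 : ‖⟪((ContinuousLinearMap.adjoint B) * A) x, x⟫_ℂ‖ ^ (2 * r)
        ≤ (‖A x‖ * ‖B x‖) ^ (2 * r) := by
      refine Real.rpow_le_rpow (norm_nonneg _) ?_ h2r.le
      rw [hinner]; exact norm_inner_le_norm _ _
    have step2 : (‖A x‖ * ‖B x‖) ^ (2 * r) = a ^ r * b ^ r := by
      rw [Real.mul_rpow (norm_nonneg _) (norm_nonneg _),
        hsq _ (norm_nonneg (A x)), hsq _ (norm_nonneg (B x))]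
    have step3 : a ^ r * b ^ r ≤ (a ^ (2 * r) + b ^ (2 * r)) / 2 := by
      rw [hsq2 a ha0, hsq2 b hb0]
      nlinarith [sq_nonneg (a ^ r - b ^ r), Real.rpow_nonneg ha0 r, Real.rpow_nonneg hb0 r]
    have haA : a = re ⟪((ContinuousLinearMap.adjoint A) * A) x, x⟫_ℂ := by
      rw [ContinuousLinearMap.mul_apply, adjoint_inner_left, inner_self_eq_norm_sq]
    have hbB : b = re ⟪((ContinuousLinearMap.adjoint B) * B) x, x⟫_ℂ := by
      rw [ContinuousLinearMap.mul_apply, adjoint_inner_left, inner_self_eq_norm_sq]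
    have step4 : a ^ (2 * r) ≤ re ⟪P x, x⟫_ℂ := by
      rw [haA]; exact mccarthy _ hApos hp x hx
    have step5 : b ^ (2 * r) ≤ re ⟪Q x, x⟫_ℂ := by
      rw [hbB]; exact mccarthy _ hBpos hp x hx
    have step6 : re ⟪P x, x⟫_ℂ + re ⟪Q x, x⟫_ℂ ≤ ‖P + Q‖ := by
      have h := inner_re_le_norm (P + Q) x hx
      simp only [add_apply, inner_add_left, map_add] at h
      linarith
    calc ‖⟪((ContinuousLinearMap.adjoint B) * A) x, x⟫_ℂ‖ ^ (2 * r)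
        ≤ a ^ r * b ^ r := step2 ▸ step1
      _ ≤ (a ^ (2 * r) + b ^ (2 * r)) / 2 := step3
      _ ≤ (re ⟪P x, x⟫_ℂ + re ⟪Q x, x⟫_ℂ) / 2 := by linarith
      _ ≤ M := by rw [hMdef]; linarith
  have hnr : 0 ≤ numRadius ((ContinuousLinearMap.adjoint B) * A) :=
    Real.iSup_nonneg fun _ => norm_nonneg _
  have hsup : numRadius ((ContinuousLinearMap.adjoint B) * A) ≤ M ^ (2 * r)⁻¹ := by
    refine Real.iSup_le (fun x => ?_) (Real.rpow_nonneg hM _)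
    have h := key x
    calc ‖⟪((ContinuousLinearMap.adjoint B) * A) (x : H), (x : H)⟫_ℂ‖
        = (‖⟪((ContinuousLinearMap.adjoint B) * A) (x : H), (x : H)⟫_ℂ‖ ^ (2 * r)) ^ (2 * r)⁻¹ := by
          rw [← Real.rpow_mul (norm_nonneg _), mul_inv_cancel₀ h2r.ne', Real.rpow_one]
      _ ≤ M ^ (2 * r)⁻¹ :=
          Real.rpow_le_rpow (Real.rpow_nonneg (norm_nonneg _) _) h (inv_nonneg.2 h2r.le)
  calc numRadius ((ContinuousLinearMap.adjoint B) * A) ^ (2 * r)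
      ≤ (M ^ (2 * r)⁻¹) ^ (2 * r) := Real.rpow_le_rpow hnr hsup h2r.le
    _ = M := by rw [← Real.rpow_mul hM, inv_mul_cancel₀ h2r.ne', Real.rpow_one]
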